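/- Let g ∈ ℝ³, g ≠ 0, k > 0, and consider ğ̇ = k[ğ × g]_× ğ on 𝕊²_g = {u : ‖u‖ = ‖g‖}. Along any solution, the function L₁(ğ) = ½‖g − ğ‖² satisfies L̇₁ = −k‖g × ğ‖² ≤ 0, and the function L₂(ğ) = ½‖g + ğ‖² satisfies L̇₂ = +k‖g × ğ‖² ≥ 0. -/

import Mathlib

open Matrix

def skew (x : Fin 3 → ℝ) : Matrix (Fin 3) (Fin 3) ℝ :=
  !![0, -x 2, x 1; x 2, 0, -x 0; -x 1, x 0, 0]

def cross (u v : Fin 3 → ℝ) : Fin 3 → ℝ := (skew u).mulVec v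

/-- Along solutions of ğ̇ = k[ğ × g]_× ğ on 𝕊²_g,
L₁ = ½‖g − ğ‖² satisfies L̇₁ = −k‖g × ğ‖² ≤ 0 and
L₂ = ½‖g + ğ‖² satisfies L̇₂ = +k‖g × ğ‖² ≥ 0. -/
theorem stmt14 (g : Fin 3 → ℝ) (hg : g ≠ 0) (k : ℝ) (hk : 0 < k)
    (γ : ℝ → Fin 3 → ℝ)
    (hsol : ∀ t, HasDerivAt γ (k • cross (cross (γ t) g) (γ t)) t)
    (hsph : ∀ t, γ t ⬝ᵥ γ t = g ⬝ᵥ g) :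
    ∀ t, (HasDerivAt (fun s => (1 / 2) * ((g - γ s) ⬝ᵥ (g - γ s)))
            (-(k * (cross g (γ t) ⬝ᵥ cross g (γ t)))) t ∧
          -(k * (cross g (γ t) ⬝ᵥ cross g (γ t))) ≤ 0) ∧
         (HasDerivAt (fun s => (1 / 2) * ((g + γ s) ⬝ᵥ (g + γ s)))
            (k * (cross g (γ t) ⬝ᵥ cross g (γ t))) t ∧
          0 ≤ k * (cross g (γ t) ⬝ᵥ cross g (γ t))) := by
  intro t
  have hi : ∀ i, HasDerivAt (fun s => γ s i)
      ((k • cross (cross (γ t) g) (γ t)) i) t :=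
    fun i => (hasDerivAt_pi.mp (hsol t)) i
  set v := k • cross (cross (γ t) g) (γ t) with hv
  have hnn : 0 ≤ k * (cross g (γ t) ⬝ᵥ cross g (γ t)) := by
    apply mul_nonneg hk.le
    simp only [dotProduct, Fin.sum_univ_three]
    nlinarith [mul_self_nonneg (cross g (γ t) 0), mul_self_nonneg (cross g (γ t) 1),
      mul_self_nonneg (cross g (γ t) 2)]
  have key : ∀ (ε : ℝ), ε = 1 ∨ ε = -1 →
      HasDerivAt (fun s => (1 / 2) * ((g + ε • γ s) ⬝ᵥ (g + ε • γ s)))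
        (ε * (k * (cross g (γ t) ⬝ᵥ cross g (γ t)))) t := by
    intro ε hε
    have h := HasDerivAt.const_mul ((1:ℝ) / 2)
        (((((hasDerivAt_const t (g 0)).add ((hi 0).const_mul ε)).mul
            ((hasDerivAt_const t (g 0)).add ((hi 0).const_mul ε))).add
          (((hasDerivAt_const t (g 1)).add ((hi 1).const_mul ε)).mul
            ((hasDerivAt_const t (g 1)).add ((hi 1).const_mul ε)))).add
          (((hasDerivAt_const t (g 2)).add ((hi 2).const_mul ε)).mul
            ((hasDerivAt_const t (g 2)).add ((hi 2).const_mul ε))))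
    have hfun : (fun s => (1 / 2) * ((g + ε • γ s) ⬝ᵥ (g + ε • γ s))) =
        (fun y => 1 / 2 *
          ((g 0 + ε * γ y 0) * (g 0 + ε * γ y 0) + (g 1 + ε * γ y 1) * (g 1 + ε * γ y 1) +
            (g 2 + ε * γ y 2) * (g 2 + ε * γ y 2))) := by
      funext s
      simp [dotProduct, Fin.sum_univ_three]
    rw [hfun]
    refine h.congr_deriv (Eq.symm ?_)
    simp only [hv, cross, skew, mulVec, dotProduct, Fin.sum_univ_three, Pi.smul_apply,
        smul_eq_mul]
    norm_num [Matrix.cons_val_zero, Matrix.cons_val_one, Matrix.head_cons, Fin.isValue,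
        Matrix.cons_val_two, Matrix.tail_cons]
    rcases hε with h | h <;> subst h <;> ring
  refine ⟨⟨?_, by linarith⟩, ⟨?_, hnn⟩⟩
  · have := key (-1) (Or.inr rfl)
    simpa [sub_eq_add_neg, neg_one_mul] using this
  · simpa using key 1 (Or.inl rfl)
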